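/- In the rational group algebra of the symmetric group S_n, the elements e_1, ..., e_n defined as the coefficients of the structure polynomial φ(x) = Σ_{π ∈ S_n} C(x + n - 1 - des(π), n)·π = Σ_{i=1}^n e_i x^i are mutually orthogonal idempotents: e_i e_j = δ_{ij} e_i. -/

import Mathlib

open scoped Classical

noncomputable section

open Finset

/-- The value of `π` at the 1-based position `i`, with the convention
`π(0) = π(n+1) = 0` and values in `{1, …, n}`. -/
def pval {n : ℕ} (π : Equiv.Perm (Fin n)) (i : ℕ) : ℕ :=
  if h : 1 ≤ i ∧ i ≤ n then ((π ⟨i - 1, by omega⟩ : Fin n) : ℕ) + 1 else 0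

/-- The descent set of `π`: positions `1 ≤ s ≤ n-1` with `π(s) > π(s+1)`. -/
def desSet {n : ℕ} (π : Equiv.Perm (Fin n)) : Finset ℕ :=
  (Finset.Ico 1 n).filter fun s => pval π (s + 1) < pval π s

/-- The descent number of `π`. -/
def des {n : ℕ} (π : Equiv.Perm (Fin n)) : ℕ := (desSet π).card

/-- The rational binomial coefficient `C(x, m)`, a polynomial of degree `m` in `x`. -/
def ratChoose (x : ℚ) (m : ℕ) : ℚ :=
  (∏ j ∈ Finset.range m, (x - (j : ℚ))) / (Nat.factorial m : ℚ)




open Finset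

lemma vanish_poly (s : Finset ℕ) (c : ℕ → ℚ)
    (h : ∀ a : ℕ, ∑ i ∈ s, (a : ℚ) ^ i * c i = 0) : ∀ i ∈ s, c i = 0 := by
  have hp : (∑ i ∈ s, Polynomial.C (c i) * Polynomial.X ^ i) = 0 := by
    apply Polynomial.eq_zero_of_infinite_isRoot
    apply Set.Infinite.mono (s := Set.range ((↑) : ℕ → ℚ))
    · rintro x ⟨a, rfl⟩
      simp only [Set.mem_setOf_eq, Polynomial.IsRoot, Polynomial.eval_finset_sum,
        Polynomial.eval_mul, Polynomial.eval_C, Polynomial.eval_pow, Polynomial.eval_X]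
      simpa [mul_comm] using h a
    · exact Set.infinite_range_of_injective Nat.cast_injective
  intro i hi
  have h2 := congrArg (fun p => Polynomial.coeff p i) hp
  simp only [Polynomial.finset_sum_coeff, Polynomial.coeff_C_mul, Polynomial.coeff_X_pow,
    Polynomial.coeff_zero, mul_ite, mul_one, mul_zero] at h2
  rwa [Finset.sum_eq_single i (fun b _ hb => by simp [Ne.symm hb]) (fun hb => absurd hi hb),
    if_pos rfl] at h2

lemma vanish_module {V : Type*} [AddCommGroup V] [Module ℚ V] (s : Finset ℕ) (c : ℕ → V)
    (h : ∀ a : ℕ, ∑ i ∈ s, (a : ℚ) ^ i • c i = 0) : ∀ i ∈ s, c i = 0 := by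
  intro i hi
  rw [← Module.forall_dual_apply_eq_zero_iff ℚ]
  intro φ
  refine vanish_poly s (fun i => φ (c i)) (fun a => ?_) i hi
  have := congrArg φ (h a)
  simpa [map_sum, map_smul, smul_eq_mul] using this

lemma vanish_module2 {V : Type*} [AddCommGroup V] [Module ℚ V] (s t : Finset ℕ)
    (T : ℕ → ℕ → V)
    (h : ∀ a b : ℕ, ∑ i ∈ s, ∑ j ∈ t, ((a : ℚ) ^ i * (b : ℚ) ^ j) • T i j = 0) :
    ∀ i ∈ s, ∀ j ∈ t, T i j = 0 := by
  intro i hi j hj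
  have key : ∀ a : ℕ, ∑ i ∈ s, (a : ℚ) ^ i • T i j = 0 := by
    intro a
    refine vanish_module t (fun j => ∑ i ∈ s, (a : ℚ) ^ i • T i j) (fun b => ?_) j hj
    rw [← h a b, Finset.sum_comm]
    refine Finset.sum_congr rfl fun j _ => ?_
    rw [Finset.smul_sum]
    refine Finset.sum_congr rfl fun i _ => ?_
    rw [smul_smul, mul_comm]
  exact vanish_module s (fun i => T i j) key i hi


lemma ratChoose_nat (N k : ℕ) : ratChoose (N : ℚ) k = (N.choose k : ℚ) := by
  rcases lt_or_ge N k with hNk | hkN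
  · rw [ratChoose, Finset.prod_eq_zero (Finset.mem_range.mpr hNk) (by simp),
      Nat.choose_eq_zero_of_lt hNk]
    simp
  · have hprod : (∏ j ∈ Finset.range k, ((N : ℚ) - (j : ℚ))) = (N.descFactorial k : ℚ) := by
      rw [Nat.descFactorial_eq_prod_range, Nat.cast_prod]
      refine Finset.prod_congr rfl fun j hj => ?_
      rw [Finset.mem_range] at hj
      rw [Nat.cast_sub (by omega)]
    rw [ratChoose, hprod, Nat.descFactorial_eq_factorial_mul_choose, Nat.cast_mul, mul_comm,
      mul_div_assoc,
      div_self (show (k.factorial : ℚ) ≠ 0 by exact_mod_cast (Nat.factorial_pos k).ne'), mul_one]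




variable {n : ℕ} {α β : Type*} [LinearOrder α] [LinearOrder β]

lemma sort_comp_strictMono {e : α → β} (he : StrictMono e) (f : Fin n → α) :
    Tuple.sort (e ∘ f) = Tuple.sort f := by
  symm
  rw [Tuple.eq_sort_iff]
  obtain ⟨h1, h2⟩ := (Tuple.eq_sort_iff (f := f) (σ := Tuple.sort f)).mp rfl
  exact ⟨fun i j hij => he.monotone (h1 hij),
    fun i j hij hfe => h2 i j hij (he.injective hfe)⟩

lemma sort_lex (f : Fin n → β) (g : Fin n → α) :
    Tuple.sort (fun i => toLex (f i, g i)) =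
      Tuple.sort g * Tuple.sort (f ∘ Tuple.sort g) := by
  symm
  rw [Tuple.eq_sort_iff]
  set τ := Tuple.sort g with hτ
  set σ := Tuple.sort (f ∘ τ) with hσ
  obtain ⟨hτ1, hτ2⟩ := (Tuple.eq_sort_iff (f := g) (σ := τ)).mp rfl
  obtain ⟨hσ1, hσ2⟩ := (Tuple.eq_sort_iff (f := f ∘ τ) (σ := σ)).mp rfl
  constructor
  · intro i j hij
    rcases eq_or_lt_of_le hij with rfl | hlt
    · exact le_rfl
    · show toLex (f (τ (σ i)), g (τ (σ i))) ≤ toLex (f (τ (σ j)), g (τ (σ j)))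
      rw [Prod.Lex.le_iff]
      rcases eq_or_lt_of_le (hσ1 hij) with heq | hlt2
      · exact Or.inr ⟨heq, hτ1 (hσ2 i j hlt heq).le⟩
      · exact Or.inl hlt2
  · intro i j hij hzeq
    have hf : f (τ (σ i)) = f (τ (σ j)) := congrArg (fun p => (ofLex p).1) hzeq
    have hg : g (τ (σ i)) = g (τ (σ j)) := congrArg (fun p => (ofLex p).2) hzeq
    exact hτ2 _ _ (hσ2 i j hij hf) hg

def phiF (n : ℕ) (α : Type*) [LinearOrder α] [Fintype α] :
    MonoidAlgebra ℚ (Equiv.Perm (Fin n)) :=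
  ∑ w : Fin n → α, MonoidAlgebra.of ℚ (Equiv.Perm (Fin n)) (Tuple.sort w)

lemma phiF_congr (α β : Type*) [LinearOrder α] [Fintype α] [LinearOrder β] [Fintype β]
    (h : Fintype.card α = Fintype.card β) : phiF n α = phiF n β := by
  let e : α ≃o β :=
    (Fintype.orderIsoFinOfCardEq α h).symm.trans (Fintype.orderIsoFinOfCardEq β rfl)
  apply Fintype.sum_equiv (Equiv.arrowCongr (Equiv.refl (Fin n)) e.toEquiv)
  intro w
  congr 1
  have : (Equiv.arrowCongr (Equiv.refl (Fin n)) e.toEquiv) w = ⇑e ∘ w := by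
    funext i; simp [Equiv.arrowCongr]
  rw [this, sort_comp_strictMono e.strictMono]

def lexPairEquiv (n a b : ℕ) :
    (Fin n → Fin b ×ₗ Fin a) ≃ (Fin n → Fin a) × (Fin n → Fin b) where
  toFun z := (fun i => (ofLex (z i)).2,
    fun i => (ofLex (z (Tuple.sort (fun j => (ofLex (z j)).2) i))).1)
  invFun p := fun i => toLex (p.2 ((Tuple.sort p.1)⁻¹ i), p.1 i)
  left_inv z := by
    funext i
    dsimp only
    rw [Equiv.Perm.coe_inv, Equiv.apply_symm_apply]
    exact toLex_ofLex (z i)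
  right_inv p := by
    obtain ⟨g, f'⟩ := p
    refine Prod.ext rfl ?_
    funext i
    dsimp only [ofLex_toLex]
    show f' ((Tuple.sort g)⁻¹ ((Tuple.sort g) i)) = f' i
    rw [Equiv.Perm.coe_inv, Equiv.symm_apply_apply]

lemma phiF_mul (a b : ℕ) : phiF n (Fin a) * phiF n (Fin b) = phiF n (Fin (a * b)) := by
  have hcard : Fintype.card (Fin b ×ₗ Fin a) = Fintype.card (Fin (a * b)) := by
    rw [show Fintype.card (Fin b ×ₗ Fin a) = Fintype.card (Fin b × Fin a) from rfl]
    simp [Nat.mul_comm]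
  rw [← phiF_congr _ _ hcard]
  have step1 : phiF n (Fin b ×ₗ Fin a) =
      ∑ p : (Fin n → Fin a) × (Fin n → Fin b),
        MonoidAlgebra.of ℚ (Equiv.Perm (Fin n)) (Tuple.sort p.1) *
          MonoidAlgebra.of ℚ (Equiv.Perm (Fin n)) (Tuple.sort p.2) := by
    refine Fintype.sum_equiv (lexPairEquiv n a b) _ _ fun z => ?_
    have hz : z = fun i => toLex ((ofLex (z i)).1, (ofLex (z i)).2) := rfl
    rw [show Tuple.sort z = Tuple.sort (fun i => toLex ((ofLex (z i)).1, (ofLex (z i)).2))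
        from rfl,
      sort_lex (fun i => (ofLex (z i)).1) (fun i => (ofLex (z i)).2), map_mul]
    rfl
  rw [step1, phiF, phiF, Finset.sum_mul_sum]
  exact (Fintype.sum_prod_type
    (f := fun p : (Fin n → Fin a) × (Fin n → Fin b) =>
      MonoidAlgebra.of ℚ (Equiv.Perm (Fin n)) (Tuple.sort p.1) *
        MonoidAlgebra.of ℚ (Equiv.Perm (Fin n)) (Tuple.sort p.2))).symm







variable {n m : ℕ}

lemma pval_eq (π : Equiv.Perm (Fin n)) (k : ℕ) (hk : k < n) :
    pval π (k + 1) = ((π ⟨k, hk⟩ : Fin n) : ℕ) + 1 := by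
  rw [pval, dif_pos ⟨by omega, by omega⟩]
  rfl

/-- `dsc π k` : there is a descent between (0-based) positions `k` and `k+1`. -/
def dsc {n : ℕ} (π : Equiv.Perm (Fin n)) (k : ℕ) : Prop :=
  pval π (k + 2) < pval π (k + 1)

lemma dsc_iff (π : Equiv.Perm (Fin n)) (k : ℕ) (hk : k + 1 < n) :
    dsc π k ↔ π ⟨k + 1, hk⟩ < π ⟨k, by omega⟩ := by
  rw [dsc, show k + 2 = (k + 1) + 1 from rfl, pval_eq π (k + 1) hk, pval_eq π k (by omega),
    Fin.lt_def]
  omega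

lemma des_eq_card (π : Equiv.Perm (Fin n)) :
    des π = ((Finset.range (n - 1)).filter fun k => dsc π k).card := by
  rw [des, desSet]
  refine Finset.card_bij' (fun s _ => s - 1) (fun k _ => k + 1) ?_ ?_ ?_ ?_
  · intro s hs
    simp only [Finset.mem_filter, Finset.mem_Ico] at hs
    simp only [Finset.mem_filter, Finset.mem_range]
    refine ⟨by omega, ?_⟩
    rw [dsc, show s - 1 + 2 = s + 1 by omega, show s - 1 + 1 = s by omega]
    exact hs.2
  · intro k hk
    simp only [Finset.mem_filter, Finset.mem_range] at hk
    simp only [Finset.mem_filter, Finset.mem_Ico]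
    exact ⟨⟨by omega, by omega⟩, hk.2⟩
  · intro s hs
    simp only [Finset.mem_filter, Finset.mem_Ico] at hs
    omega
  · intro k _
    omega

lemma des_le (π : Equiv.Perm (Fin n)) : des π ≤ n - 1 := by
  rw [des_eq_card]
  exact le_trans (Finset.card_filter_le _ _) (by simp)

/-- number of non-descents among the first `i` gaps -/
def ndc {n : ℕ} (π : Equiv.Perm (Fin n)) (i : ℕ) : ℕ :=
  ((Finset.range i).filter fun k => ¬ dsc π k).card

lemma ndc_le (π : Equiv.Perm (Fin n)) (i : ℕ) : ndc π i ≤ i :=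
  le_trans (Finset.card_filter_le _ _) (by simp)

lemma ndc_mono (π : Equiv.Perm (Fin n)) {i j : ℕ} (h : i ≤ j) : ndc π i ≤ ndc π j :=
  Finset.card_le_card (Finset.filter_subset_filter _ (Finset.range_subset_range.2 h))

lemma ndc_succ (π : Equiv.Perm (Fin n)) (k : ℕ) :
    ndc π (k + 1) = ndc π k + (if dsc π k then 0 else 1) := by
  rw [ndc, Finset.range_add_one, Finset.filter_insert]
  by_cases h : dsc π k
  · simp [h, ndc]
  · rw [if_pos h, Finset.card_insert_of_notMem (by simp), if_neg h]
    simp [ndc]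

lemma ndc_top (π : Equiv.Perm (Fin n)) : ndc π (n - 1) = (n - 1) - des π := by
  have h := Finset.card_filter_add_card_filter_not (s := Finset.range (n - 1))
    (p := fun k => dsc π k)
  rw [← des_eq_card, Finset.card_range] at h
  rw [ndc]
  omega

lemma ndc_ge (π : Equiv.Perm (Fin n)) (i : ℕ) :
    (n - 1) - des π ≤ ndc π i + ((n - 1) - i) := by
  rcases le_or_gt (n - 1) i with h | h
  · have := ndc_mono π h
    rw [ndc_top] at this
    omega
  · have hsplit : Finset.range (n - 1) = Finset.Ico 0 i ∪ Finset.Ico i (n - 1) := by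
      rw [Finset.range_eq_Ico]
      exact (Finset.Ico_union_Ico_eq_Ico (by omega) (by omega)).symm
    have hle : ndc π (n - 1) ≤ ndc π i + (Finset.Ico i (n - 1)).card := by
      rw [ndc, ndc, hsplit, Finset.filter_union, Finset.range_eq_Ico]
      exact le_trans (Finset.card_union_le _ _)
        (Nat.add_le_add le_rfl (Finset.card_filter_le _ _))
    rw [ndc_top, Nat.card_Ico] at hle
    omega

lemma monotone_of_adj {α : Type*} [Preorder α] {N : ℕ} {f : Fin N → α}
    (h : ∀ k, (hk : k + 1 < N) → f ⟨k, by omega⟩ ≤ f ⟨k + 1, hk⟩) : Monotone f := by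
  match N, f, h with
  | 0, f, h => exact fun i => i.elim0
  | N + 1, f, h =>
    refine Fin.monotone_iff_le_succ.mpr fun i => ?_
    exact h i.1 (by omega)

lemma strictMono_of_adj {α : Type*} [Preorder α] {N : ℕ} {f : Fin N → α}
    (h : ∀ k, (hk : k + 1 < N) → f ⟨k, by omega⟩ < f ⟨k + 1, hk⟩) : StrictMono f := by
  match N, f, h with
  | 0, f, h => exact fun i => i.elim0
  | N + 1, f, h =>
    refine Fin.strictMono_iff_lt_succ.mpr fun i => ?_
    exact h i.1 (by omega)

lemma pairs_of_adj {N : ℕ} (π : Equiv.Perm (Fin N)) {m : ℕ} {v : Fin N → Fin m}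
    (hv : Monotone v)
    (h : ∀ k, (hk : k + 1 < N) → v ⟨k, by omega⟩ = v ⟨k + 1, hk⟩ →
      π ⟨k, by omega⟩ < π ⟨k + 1, hk⟩) :
    ∀ i j : Fin N, i < j → v i = v j → π i < π j := by
  suffices H : ∀ t : ℕ, ∀ i j : Fin N, (j : ℕ) = (i : ℕ) + (t + 1) → v i = v j → π i < π j by
    intro i j hij hveq
    rw [Fin.lt_def] at hij
    exact H ((j : ℕ) - (i : ℕ) - 1) i j (by omega) hveq
  intro t
  induction t with
  | zero =>
    intro i j hj hveq
    have hk : (i : ℕ) + 1 < N := by omega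
    have e1 : (⟨(i : ℕ), by omega⟩ : Fin N) = i := Fin.ext rfl
    have e2 : (⟨(i : ℕ) + 1, hk⟩ : Fin N) = j := Fin.ext (by simp only [Fin.val_mk]; omega)
    have := h i.1 hk (by rw [e1, e2]; exact hveq)
    rwa [e1, e2] at this
  | succ t ih =>
    intro i j hj hveq
    have hmidlt : (i : ℕ) + (t + 1) < N := by omega
    set mid : Fin N := ⟨(i : ℕ) + (t + 1), hmidlt⟩ with hmid
    have hmidv : (mid : ℕ) = (i : ℕ) + (t + 1) := rfl
    have hv1 : v i ≤ v mid := hv (by rw [Fin.le_def, hmidv]; omega)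
    have hv2 : v mid ≤ v j := hv (by rw [Fin.le_def, hmidv]; omega)
    have him : v i = v mid := le_antisymm hv1 (by rw [hveq]; exact hv2)
    have hmj : v mid = v j := by rw [← hveq, him]
    have h1 : π i < π mid := ih i mid rfl him
    have hk2 : (mid : ℕ) + 1 < N := by rw [hmidv]; omega
    have e1 : (⟨(mid : ℕ), by omega⟩ : Fin N) = mid := Fin.ext rfl
    have e2 : (⟨(mid : ℕ) + 1, hk2⟩ : Fin N) = j := Fin.ext (by simp only [Fin.val_mk]; omega)
    have h2 : π mid < π j := by
      have := h (mid : ℕ) hk2 (by rw [e1, e2]; exact hmj)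
      rwa [e1, e2] at this
    exact h1.trans h2

lemma strictMono_gap {N M : ℕ} {u : Fin N → Fin M} (hu : StrictMono u) :
    ∀ i j : Fin N, (i : ℕ) ≤ (j : ℕ) → (u i : ℕ) + ((j : ℕ) - (i : ℕ)) ≤ (u j : ℕ) := by
  suffices H : ∀ t : ℕ, ∀ i j : Fin N, (j : ℕ) = (i : ℕ) + t → (u i : ℕ) + t ≤ (u j : ℕ) by
    intro i j hij
    exact le_trans (by omega) (H ((j : ℕ) - (i : ℕ)) i j (by omega))
  intro t
  induction t with
  | zero =>
    intro i j hj
    have : j = i := Fin.ext (by omega)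
    subst this; omega
  | succ t ih =>
    intro i j hj
    have hmidlt : (i : ℕ) + t < N := by omega
    set mid : Fin N := ⟨(i : ℕ) + t, hmidlt⟩ with hmid
    have hmidv : (mid : ℕ) = (i : ℕ) + t := rfl
    have h1 := ih i mid hmidv.symm
    have h2 : u mid < u j := hu (by rw [Fin.lt_def, hmidv]; omega)
    rw [Fin.lt_def] at h2
    omega

lemma le_apply_of_strictMono {N M : ℕ} {u : Fin N → Fin M} (hu : StrictMono u) (i : Fin N) :
    (i : ℕ) ≤ (u i : ℕ) := by
  have h0 : (0 : ℕ) < N := lt_of_le_of_lt (Nat.zero_le _) i.isLt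
  have h := strictMono_gap hu ⟨0, h0⟩ i (by simp)
  simp only [Fin.val_mk] at h
  omega

lemma card_fiber_eq_V (π : Equiv.Perm (Fin n)) (m : ℕ) :
    (Finset.univ.filter fun w : Fin n → Fin m => Tuple.sort w = π).card
      = (Finset.univ.filter fun v : Fin n → Fin m =>
          Monotone v ∧ ∀ k, (hk : k + 1 < n) → dsc π k →
            v ⟨k, by omega⟩ < v ⟨k + 1, hk⟩).card := by
  refine Finset.card_bij' (fun w _ => w ∘ ⇑π) (fun v _ => v ∘ ⇑π⁻¹) ?_ ?_ ?_ ?_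
  · intro w hw
    have hw' := (Finset.mem_filter.mp hw).2
    obtain ⟨hmono, hpairs⟩ := (Tuple.eq_sort_iff (f := w) (σ := π)).mp hw'.symm
    refine Finset.mem_filter.mpr ⟨Finset.mem_univ _, hmono, ?_⟩
    intro k hk hd
    have hπ := (dsc_iff π k hk).mp hd
    have hle : (w ∘ ⇑π) ⟨k, by omega⟩ ≤ (w ∘ ⇑π) ⟨k + 1, hk⟩ :=
      hmono (by rw [Fin.le_def]; simp only [Fin.val_mk]; omega)
    refine lt_of_le_of_ne hle fun heq => ?_
    have := hpairs ⟨k, by omega⟩ ⟨k + 1, hk⟩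
      (by rw [Fin.lt_def]; simp only [Fin.val_mk]; omega) heq
    exact absurd this (not_lt.mpr hπ.le)
  · intro v hv
    obtain ⟨hmono, hstrict⟩ := (Finset.mem_filter.mp hv).2
    refine Finset.mem_filter.mpr ⟨Finset.mem_univ _, ?_⟩
    have hcomp : (v ∘ ⇑π⁻¹) ∘ ⇑π = v := by
      funext x; simp
    symm
    rw [Tuple.eq_sort_iff]
    constructor
    · show Monotone ((v ∘ ⇑π⁻¹) ∘ ⇑π)
      rw [hcomp]; exact hmono
    · intro i j hij heq
      have heq' : v i = v j := by
        have e1 : π⁻¹ (π i) = i := π.symm_apply_apply i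
        have e2 : π⁻¹ (π j) = j := π.symm_apply_apply j
        simpa [Function.comp, e1, e2] using heq
      have hadj : ∀ k, (hk : k + 1 < n) → v ⟨k, Nat.lt_of_succ_lt hk⟩ = v ⟨k + 1, hk⟩ →
          π ⟨k, Nat.lt_of_succ_lt hk⟩ < π ⟨k + 1, hk⟩ := by
        intro k hk heq2
        have hkn : k < n := Nat.lt_of_succ_lt hk
        rcases lt_trichotomy (π ⟨k + 1, hk⟩) (π ⟨k, hkn⟩) with hlt | heq3 | hgt
        · exact absurd heq2 (hstrict k hk ((dsc_iff π k hk).mpr hlt)).ne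
        · have hcon := π.injective heq3
          have hval : k + 1 = k := congrArg Fin.val hcon
          exact absurd hval (Nat.succ_ne_self k)
        · exact hgt
      exact pairs_of_adj π hmono hadj i j hij heq'
  · intro w _
    funext x; simp
  · intro v _
    funext x; simp

lemma card_V_eq_U (π : Equiv.Perm (Fin n)) (m : ℕ) :
    (Finset.univ.filter fun v : Fin n → Fin m =>
        Monotone v ∧ ∀ k, (hk : k + 1 < n) → dsc π k →
          v ⟨k, by omega⟩ < v ⟨k + 1, hk⟩).card
    = (Finset.univ.filter fun u : Fin n → Fin (m + (n - 1 - des π)) =>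
        StrictMono u).card := by
  have hbound1 : ∀ (v : Fin n → Fin m) (idx : Fin n),
      (v idx : ℕ) + ndc π idx < m + (n - 1 - des π) := by
    intro v idx
    have h1 : (v idx : ℕ) < m := (v idx).isLt
    have h2 : ndc π idx ≤ (n - 1) - des π := by
      have h3 := ndc_mono π (show (idx : ℕ) ≤ n - 1 by have := idx.isLt; omega)
      rw [ndc_top] at h3; exact h3
    omega
  have hbound2 : ∀ (u : Fin n → Fin (m + (n - 1 - des π))), StrictMono u → ∀ idx : Fin n,
      (u idx : ℕ) - ndc π idx < m := by
    intro u hu idx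
    have hidx : (idx : ℕ) < n := idx.isLt
    have hgap := strictMono_gap hu idx ⟨n - 1, by omega⟩ (by simp only [Fin.val_mk]; omega)
    have htop : (u ⟨n - 1, by omega⟩ : ℕ) < m + (n - 1 - des π) := (u _).isLt
    have hndc := ndc_ge π idx
    have hap := le_apply_of_strictMono hu (⟨n - 1, by omega⟩ : Fin n)
    simp only [Fin.val_mk] at hgap hap
    omega
  refine Finset.card_bij'
    (fun v _ => fun idx =>
      (⟨(v idx : ℕ) + ndc π idx, hbound1 v idx⟩ : Fin (m + (n - 1 - des π))))
    (fun u hu => fun idx => (⟨(u idx : ℕ) - ndc π idx,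
      hbound2 u (Finset.mem_filter.mp hu).2 idx⟩ : Fin m)) ?_ ?_ ?_ ?_
  · intro v hv
    obtain ⟨hmono, hstrict⟩ := (Finset.mem_filter.mp hv).2
    refine Finset.mem_filter.mpr ⟨Finset.mem_univ _, ?_⟩
    apply strictMono_of_adj
    intro k hk
    rw [Fin.mk_lt_mk]
    simp only [Fin.val_mk]
    rw [ndc_succ]
    by_cases hd : dsc π k
    · rw [if_pos hd]
      have h1 := hstrict k hk hd
      rw [Fin.lt_def] at h1
      omega
    · rw [if_neg hd]
      have h1 : v ⟨k, by omega⟩ ≤ v ⟨k + 1, hk⟩ :=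
        hmono (by rw [Fin.le_def]; simp only [Fin.val_mk]; omega)
      rw [Fin.le_def] at h1
      omega
  · intro u hu
    have hstrict := (Finset.mem_filter.mp hu).2
    refine Finset.mem_filter.mpr ⟨Finset.mem_univ _, ?_, ?_⟩
    · apply monotone_of_adj
      intro k hk
      rw [Fin.mk_le_mk]
      simp only [Fin.val_mk]
      rw [ndc_succ]
      have h1 : u ⟨k, by omega⟩ < u ⟨k + 1, hk⟩ :=
        hstrict (by rw [Fin.lt_def]; simp only [Fin.val_mk]; omega)
      rw [Fin.lt_def] at h1
      have h2 : (⟨k, by omega⟩ : Fin n).val ≤ (u ⟨k, by omega⟩ : ℕ) :=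
        le_apply_of_strictMono hstrict _
      simp only [Fin.val_mk] at h2
      have h3 := ndc_le π k
      by_cases hd : dsc π k
      · rw [if_pos hd]; omega
      · rw [if_neg hd]; omega
    · intro k hk hd
      rw [Fin.mk_lt_mk]
      simp only [Fin.val_mk]
      rw [ndc_succ, if_pos hd]
      have h1 : u ⟨k, by omega⟩ < u ⟨k + 1, hk⟩ :=
        hstrict (by rw [Fin.lt_def]; simp only [Fin.val_mk]; omega)
      rw [Fin.lt_def] at h1
      have h2 : (⟨k, by omega⟩ : Fin n).val ≤ (u ⟨k, by omega⟩ : ℕ) :=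
        le_apply_of_strictMono hstrict _
      simp only [Fin.val_mk] at h2
      have h3 := ndc_le π k
      omega
  · intro v _
    funext idx
    apply Fin.ext
    simp only [Fin.val_mk]
    omega
  · intro u hu
    have hstrict := (Finset.mem_filter.mp hu).2
    funext idx
    apply Fin.ext
    simp only [Fin.val_mk]
    have h2 := le_apply_of_strictMono hstrict idx
    have h3 := ndc_le π (idx : ℕ)
    omega

lemma card_U (N M : ℕ) :
    (Finset.univ.filter fun u : Fin N → Fin M => StrictMono u).card = M.choose N := by
  have hrw : M.choose N = (Finset.powersetCard N (Finset.univ : Finset (Fin M))).card := by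
    rw [Finset.card_powersetCard, Finset.card_univ, Fintype.card_fin]
  rw [hrw]
  refine Finset.card_bij' (fun u _ => Finset.image u Finset.univ)
    (fun S hS => fun idx => S.orderEmbOfFin (Finset.mem_powersetCard.mp hS).2 idx) ?_ ?_ ?_ ?_
  · intro u hu
    have hstrict := (Finset.mem_filter.mp hu).2
    refine Finset.mem_powersetCard.mpr ⟨Finset.subset_univ _, ?_⟩
    rw [Finset.card_image_of_injective _ hstrict.injective, Finset.card_univ, Fintype.card_fin]
  · intro S hS
    exact Finset.mem_filter.mpr ⟨Finset.mem_univ _,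
      (S.orderEmbOfFin (Finset.mem_powersetCard.mp hS).2).strictMono⟩
  · intro u hu
    have hstrict := (Finset.mem_filter.mp hu).2
    exact (Finset.orderEmbOfFin_unique _
      (fun x => Finset.mem_image_of_mem u (Finset.mem_univ x)) hstrict).symm
  · intro S hS
    ext y
    simp only [Finset.mem_image, Finset.mem_univ, true_and]
    constructor
    · rintro ⟨x, rfl⟩
      exact Finset.orderEmbOfFin_mem S _ x
    · intro hy
      have : y ∈ Set.range (S.orderEmbOfFin (Finset.mem_powersetCard.mp hS).2) := by
        rw [Finset.range_orderEmbOfFin]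
        exact hy
      obtain ⟨x, hx⟩ := this
      exact ⟨x, hx⟩

lemma card_fiber (π : Equiv.Perm (Fin n)) (m : ℕ) :
    (Finset.univ.filter fun w : Fin n → Fin m => Tuple.sort w = π).card
      = (m + (n - 1 - des π)).choose n :=
  (card_fiber_eq_V π m).trans ((card_V_eq_U π m).trans (card_U n (m + (n - 1 - des π))))

lemma phiF_eq (n m : ℕ) : phiF n (Fin m) =
    ∑ π : Equiv.Perm (Fin n),
      (((m + (n - 1 - des π)).choose n : ℕ) : ℚ) •
        MonoidAlgebra.of ℚ (Equiv.Perm (Fin n)) π := by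
  rw [phiF, ← Finset.sum_fiberwise_of_maps_to
    (g := fun w : Fin n → Fin m => Tuple.sort w) (t := Finset.univ)
    (fun x _ => Finset.mem_univ _)]
  refine Finset.sum_congr rfl fun π _ => ?_
  calc ∑ w ∈ Finset.univ.filter fun w : Fin n → Fin m => Tuple.sort w = π,
        MonoidAlgebra.of ℚ (Equiv.Perm (Fin n)) (Tuple.sort w)
      = ∑ w ∈ Finset.univ.filter fun w : Fin n → Fin m => Tuple.sort w = π,
        MonoidAlgebra.of ℚ (Equiv.Perm (Fin n)) π := by
        refine Finset.sum_congr rfl fun w hw => ?_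
        rw [(Finset.mem_filter.mp hw).2]
    _ = _ := by
        rw [Finset.sum_const, card_fiber]
        exact (Nat.cast_smul_eq_nsmul ℚ _ _).symm

theorem stmt2 (n : ℕ) (e : ℕ → MonoidAlgebra ℚ (Equiv.Perm (Fin n)))
    (he : ∀ x : ℚ,
      ∑ π : Equiv.Perm (Fin n),
        ratChoose (x + (n : ℚ) - 1 - (des π : ℚ)) n •
          MonoidAlgebra.of ℚ (Equiv.Perm (Fin n)) π
        = ∑ i ∈ Finset.Icc 1 n, x ^ i • e i) :
    ∀ i ∈ Finset.Icc 1 n, ∀ j ∈ Finset.Icc 1 n,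
      e i * e j = if i = j then e i else 0 := by
  obtain rfl | hn := Nat.eq_zero_or_pos n
  · intro i hi
    simp only [Finset.mem_Icc] at hi
    omega
  intro i hi j hj
  have hP : ∀ m : ℕ, phiF n (Fin m) = ∑ i ∈ Finset.Icc 1 n, (m : ℚ) ^ i • e i := by
    intro m
    rw [phiF_eq, ← he (m : ℚ)]
    refine Finset.sum_congr rfl fun π _ => ?_
    congr 1
    have hd := des_le π
    have h2 : ((m + (n - 1 - des π) : ℕ) : ℚ) = (m : ℚ) + (n : ℚ) - 1 - (des π : ℚ) := by
      rw [Nat.cast_add, Nat.cast_sub hd, Nat.cast_sub hn]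
      push_cast
      ring
    rw [← h2, ratChoose_nat]
  have hmul : ∀ a b : ℕ,
      (∑ i ∈ Finset.Icc 1 n, (a : ℚ) ^ i • e i) * (∑ j ∈ Finset.Icc 1 n, (b : ℚ) ^ j • e j)
        = ∑ k ∈ Finset.Icc 1 n, ((a : ℚ) ^ k * (b : ℚ) ^ k) • e k := by
    intro a b
    rw [← hP, ← hP, phiF_mul, hP (a * b)]
    refine Finset.sum_congr rfl fun k _ => ?_
    congr 1
    push_cast
    rw [mul_pow]
  have hvanish : ∀ a b : ℕ, ∑ i ∈ Finset.Icc 1 n, ∑ j ∈ Finset.Icc 1 n,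
      ((a : ℚ) ^ i * (b : ℚ) ^ j) • (e i * e j - if i = j then e i else 0) = 0 := by
    intro a b
    have expand : (∑ i ∈ Finset.Icc 1 n, (a : ℚ) ^ i • e i) *
        (∑ j ∈ Finset.Icc 1 n, (b : ℚ) ^ j • e j)
        = ∑ i ∈ Finset.Icc 1 n, ∑ j ∈ Finset.Icc 1 n,
            ((a : ℚ) ^ i * (b : ℚ) ^ j) • (e i * e j) := by
      rw [Finset.sum_mul_sum]
      refine Finset.sum_congr rfl fun i _ => Finset.sum_congr rfl fun j _ => ?_
      rw [smul_mul_assoc, mul_smul_comm, smul_smul]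
    have diag : ∑ i ∈ Finset.Icc 1 n, ∑ j ∈ Finset.Icc 1 n,
        ((a : ℚ) ^ i * (b : ℚ) ^ j) • (if i = j then e i else 0)
        = ∑ k ∈ Finset.Icc 1 n, ((a : ℚ) ^ k * (b : ℚ) ^ k) • e k := by
      refine Finset.sum_congr rfl fun i hi' => ?_
      rw [Finset.sum_eq_single i (fun b' _ hb' => by rw [if_neg (Ne.symm hb'), smul_zero])
        (fun hni => absurd hi' hni), if_pos rfl]
    simp only [smul_sub]
    have hsplit2 : (∑ i ∈ Finset.Icc 1 n, ∑ j ∈ Finset.Icc 1 n,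
        (((a : ℚ) ^ i * (b : ℚ) ^ j) • (e i * e j) -
          ((a : ℚ) ^ i * (b : ℚ) ^ j) • (if i = j then e i else 0)))
        = (∑ i ∈ Finset.Icc 1 n, ∑ j ∈ Finset.Icc 1 n,
            ((a : ℚ) ^ i * (b : ℚ) ^ j) • (e i * e j))
          - ∑ i ∈ Finset.Icc 1 n, ∑ j ∈ Finset.Icc 1 n,
            ((a : ℚ) ^ i * (b : ℚ) ^ j) • (if i = j then e i else 0) := by
      rw [← Finset.sum_sub_distrib]
      exact Finset.sum_congr rfl fun i _ => Finset.sum_sub_distrib _ _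
    rw [hsplit2, ← expand, hmul a b, diag, sub_self]
  have := vanish_module2 (Finset.Icc 1 n) (Finset.Icc 1 n)
    (fun i j => e i * e j - if i = j then e i else 0) hvanish i hi j hj
  exact sub_eq_zero.mp this
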